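/- Let F = F(X) be a free group, let w be a cyclic word over X ∪ X⁻¹, and let τ be a Whitehead automorphism of F of the second kind with multiplier a such that neither a nor a⁻¹ appears in w. Then either τ(w) = w (as cyclic words) or the length of τ(w) is strictly greater than the length of w. -/

import Mathlib

open FreeGroup

/-- The length of a cyclic word (conjugacy class): the minimal word length of a representative. -/
noncomputable def cycLen {X : Type} [DecidableEq X] (c : ConjClasses (FreeGroup X)) : ℕ :=
  sInf {n | ∃ g : FreeGroup X, ConjClasses.mk g = c ∧ (FreeGroup.toWord g).length = n}

/-- An element of a free group is cyclically reduced if its first letter is not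
the inverse of its last letter. -/
def IsCycRed {X : Type} [DecidableEq X] (g : FreeGroup X) : Prop :=
  ∀ x : X × Bool, (FreeGroup.toWord g).head? = some x →
    (FreeGroup.toWord g).getLast? ≠ some (x.1, !x.2)

/-- The set `L(c)` of letters of `X` occurring (up to inversion) in the cyclic word `c`. -/
def usedLetters {X : Type} [DecidableEq X] (c : ConjClasses (FreeGroup X)) : Set X :=
  {x | ∃ g : FreeGroup X, ConjClasses.mk g = c ∧ IsCycRed g ∧ ∃ b : Bool, (x, b) ∈ FreeGroup.toWord g}

/-- The action of an automorphism of the free group on cyclic words (conjugacy classes). -/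
def actC {X : Type} (φ : FreeGroup X ≃* FreeGroup X) (c : ConjClasses (FreeGroup X)) :
    ConjClasses (FreeGroup X) :=
  ConjClasses.map (φ : FreeGroup X →* FreeGroup X) c

/-- `τ` is a Whitehead automorphism of the second kind with multiplier `a ∈ X ∪ X⁻¹`. -/
def IsWhiteheadMult {X : Type} (a : X × Bool) (τ : FreeGroup X ≃* FreeGroup X) : Prop :=
  ∀ x : X, τ (of x) ∈ ({of x, of x * FreeGroup.mk [a],
      (FreeGroup.mk [a])⁻¹ * of x, (FreeGroup.mk [a])⁻¹ * of x * FreeGroup.mk [a]} :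
      Set (FreeGroup X))

/-- `τ` is a relabeling automorphism: it permutes the set `X ∪ X⁻¹`. -/
def IsRelabeling {X : Type} (τ : FreeGroup X ≃* FreeGroup X) : Prop :=
  ∀ x : X, ∃ y : X × Bool, τ (of x) = FreeGroup.mk [y]

/-- Whitehead automorphisms. -/
def IsWhitehead {X : Type} (τ : FreeGroup X ≃* FreeGroup X) : Prop :=
  IsRelabeling τ ∨ ∃ a : X × Bool, IsWhiteheadMult a τ


open List

set_option linter.unusedSectionVars false

section Aux

variable {X : Type} [DecidableEq X]


/-- two adjacent letters don't cancel -/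
def NoCanc (p q : X × Bool) : Prop := p.1 = q.1 → p.2 = q.2

lemma noCanc_of_fst_ne {p q : X × Bool} (h : p.1 ≠ q.1) : NoCanc p q := fun h' => absurd h' h

lemma chain'_reduce (L : List (X × Bool)) : List.Chain' NoCanc (reduce L) := by
  induction L with
  | nil => exact List.isChain_nil
  | cons x L ih =>
    rw [reduce.cons]
    rcases h : reduce L with _ | ⟨y, t⟩
    · simp; exact List.isChain_singleton _
    · rw [h] at ih
      show Chain' NoCanc (if x.1 = y.1 ∧ x.2 = !y.2 then t else x :: y :: t)
      by_cases hc : x.1 = y.1 ∧ x.2 = !y.2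
      · rw [if_pos hc]; exact ih.tail
      · rw [if_neg hc]
        refine List.IsChain.cons_cons ?_ ih
        intro h1
        rcases Bool.eq_or_eq_not x.2 y.2 with h2 | h2
        · exact h2
        · exact absurd ⟨h1, h2⟩ hc

lemma reduce_eq_self_of_chain {L : List (X × Bool)} (h : List.Chain' NoCanc L) :
    reduce L = L := by
  induction L with
  | nil => rfl
  | cons x L ih =>
    rw [reduce.cons, ih h.tail]
    rcases L with _ | ⟨y, t⟩
    · rfl
    · show (if x.1 = y.1 ∧ x.2 = !y.2 then t else x :: y :: t) = x :: y :: t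
      have hxy : NoCanc x y := List.isChain_cons_cons.1 h |>.1
      have : ¬(x.1 = y.1 ∧ x.2 = !y.2) := by
        rintro ⟨h1, h2⟩
        have := hxy h1
        simp [this] at h2
      simp [this]

lemma chain'_toWord (g : FreeGroup X) : List.Chain' NoCanc (toWord g) := by
  rw [← reduce_toWord]; exact chain'_reduce _

lemma exists_isConj_cycred : ∀ (n : ℕ) (g : FreeGroup X), g.norm ≤ n →
    ∃ h, IsConj g h ∧ IsCycRed h := by
  intro n
  induction n with
  | zero =>
    intro g hg
    refine ⟨g, IsConj.refl g, ?_⟩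
    intro x hx
    have : g.toWord = [] := List.length_eq_zero_iff.1 (Nat.le_zero.1 hg)
    rw [this] at hx; simp at hx
  | succ n ih =>
    intro g hg
    by_cases hcyc : IsCycRed g
    · exact ⟨g, IsConj.refl g, hcyc⟩
    · simp only [IsCycRed, not_forall] at hcyc
      obtain ⟨x, hhd, hlast⟩ := hcyc
      rw [not_not] at hlast
      rcases hL : g.toWord with _ | ⟨x', t⟩
      · rw [hL] at hhd; simp at hhd
      · rw [hL] at hhd
        simp only [List.head?_cons, Option.some.injEq] at hhd
        rcases t.eq_nil_or_concat with rfl | ⟨M, y, rfl⟩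
        · rw [hL] at hlast
          simp only [List.getLast?_singleton, Option.some.injEq] at hlast
          rw [← hhd] at hlast
          have : x'.2 = !x'.2 := congrArg Prod.snd hlast
          simp at this
        · simp only [List.concat_eq_append] at hL
          rw [hL] at hlast
          have hy : y = (x'.1, !x'.2) := by
            have hgl : (x' :: (M ++ [y])).getLast? = some y := by
              rw [show x' :: (M ++ [y]) = (x' :: M) ++ [y] by simp]
              exact List.getLast?_concat
            rw [hgl, ← hhd] at hlast
            simpa using hlast
          have hmkinv : mk [y] = (mk [x'])⁻¹ := by
            rw [inv_mk]
            congr 1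
            simp [invRev, hy]
          have hgconj : g = mk [x'] * mk M * (mk [x'])⁻¹ := by
            conv_lhs => rw [← mk_toWord (x := g), hL]
            rw [show x' :: (M ++ [y]) = [x'] ++ M ++ [y] by simp]
            rw [← mul_mk, ← mul_mk, hmkinv]
          have hMnorm : (mk M).norm ≤ n := by
            have h1 : (mk M).norm ≤ M.length := norm_mk_le
            have h2 : g.norm = M.length + 2 := by
              show g.toWord.length = _
              rw [hL]; simp
            omega
          obtain ⟨h, hconj, hcr⟩ := ih (mk M) hMnorm
          refine ⟨h, IsConj.trans ?_ hconj, hcr⟩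
          exact (isConj_iff.2 ⟨mk [x'], hgconj.symm⟩).symm

lemma exists_cycred_rep (c : ConjClasses (FreeGroup X)) :
    ∃ g : FreeGroup X, ConjClasses.mk g = c ∧ IsCycRed g := by
  obtain ⟨g₀, rfl⟩ := ConjClasses.mk_surjective c
  obtain ⟨h, hc, hcr⟩ := exists_isConj_cycred g₀.norm g₀ le_rfl
  exact ⟨h, (ConjClasses.mk_eq_mk_iff_isConj.2 hc).symm, hcr⟩

lemma fg_norm_pow_le (c : FreeGroup X) (m : ℕ) : (c ^ m).norm ≤ m * c.norm := by
  induction m with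
  | zero => simp
  | succ m ih =>
    rw [pow_succ]
    calc (c ^ m * c).norm ≤ (c ^ m).norm + c.norm := norm_mul_le _ _
    _ ≤ m * c.norm + c.norm := by omega
    _ = (m + 1) * c.norm := by ring

lemma chain'_flatten_replicate {H : List (X × Bool)} (h : List.Chain' NoCanc (H ++ H)) (m : ℕ) :
    List.Chain' NoCanc (List.flatten (List.replicate m H)) := by
  induction m with
  | zero => simp; exact List.isChain_nil
  | succ m ih =>
    rw [List.replicate_succ, List.flatten_cons]
    refine List.isChain_append.2 ?_
    refine ⟨h.left_of_append, ih, ?_⟩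
    intro x hx y hy
    have hhead : y ∈ H.head? := by
      rcases m with _ | m
      · simp at hy
      · rw [List.replicate_succ, List.flatten_cons] at hy
        rcases H with _ | ⟨z, t⟩
        · simp at hy
        · simpa using hy
    exact (List.isChain_append.1 h).2.2 x hx y hhead

lemma norm_conj_ge {H : List (X × Bool)} (hch : List.Chain' NoCanc (H ++ H))
    (u : FreeGroup X) : H.length ≤ (u * mk H * u⁻¹).norm := by
  by_contra hlt
  push_neg at hlt
  set c := u * mk H * u⁻¹ with hc
  set m := 2 * u.norm + 1 with hm
  have hpow : (mk H) ^ m = u⁻¹ * c ^ m * u := by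
    rw [hc, conj_pow]; group
  have hnorm_pow : ((mk H) ^ m).norm = m * H.length := by
    rw [pow_mk]
    show (FreeGroup.toWord (mk (List.replicate m H).flatten)).length = m * H.length
    rw [toWord_mk, reduce_eq_self_of_chain (chain'_flatten_replicate hch m)]
    simp [List.length_flatten, Function.comp_def, mul_comm]
  have hle : ((mk H) ^ m).norm ≤ u⁻¹.norm + (c ^ m).norm + u.norm := by
    rw [hpow]
    calc (u⁻¹ * c ^ m * u).norm ≤ (u⁻¹ * c ^ m).norm + u.norm := norm_mul_le _ _
    _ ≤ u⁻¹.norm + (c ^ m).norm + u.norm := by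
        have := norm_mul_le u⁻¹ (c ^ m); omega
  have h2 := fg_norm_pow_le c m
  rw [hnorm_pow, norm_inv_eq] at hle
  have hcc : c.norm + 1 ≤ H.length := hlt
  have h3 : m * (c.norm + 1) ≤ m * H.length := Nat.mul_le_mul_left m hcc
  have h4 : m * (c.norm + 1) = m * c.norm + m := by ring
  omega

def pw (a : X × Bool) : Bool → FreeGroup X := fun b => if b then mk [a] else 1

def seg (a : X × Bool) (b c : Bool) : List (X × Bool) :=
  if b = c then [] else if b then [a] else [(a.1, !a.2)]

lemma mk_seg (a : X × Bool) (b c : Bool) : mk (seg a b c) = pw a b * (pw a c)⁻¹ := by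
  have hainv : mk [(a.1, !a.2)] = (mk [a])⁻¹ := by
    rw [inv_mk]; rfl
  cases b <;> cases c
  · show mk [] = 1 * 1⁻¹
    rw [inv_one, mul_one]; exact one_eq_mk.symm
  · show mk [(a.1, !a.2)] = 1 * (mk [a])⁻¹
    rw [one_mul]; exact hainv
  · show mk [a] = mk [a] * 1⁻¹
    rw [inv_one, mul_one]
  · show mk [] = mk [a] * (mk [a])⁻¹
    rw [mul_inv_cancel]; exact one_eq_mk.symm

lemma seg_fst (a : X × Bool) (b c : Bool) : ∀ p ∈ seg a b c, p.1 = a.1 := by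
  intro p hp
  unfold seg at hp
  split at hp
  · simp at hp
  · split at hp <;> simp at hp <;> simp [hp]

lemma seg_length_le (a : X × Bool) (b c : Bool) : (seg a b c).length ≤ 1 := by
  unfold seg; split
  · simp
  · split <;> simp

def Wrec (a : X × Bool) (γ δ : X × Bool → Bool) : List (X × Bool) → List (X × Bool)
  | [] => []
  | [ℓ] => [ℓ]
  | ℓ₁ :: ℓ₂ :: rest => ℓ₁ :: (seg a (δ ℓ₁) (γ ℓ₂) ++ Wrec a γ δ (ℓ₂ :: rest))

variable {a : X × Bool} {γ δ : X × Bool → Bool}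

lemma Wrec_cons_exists (ℓ : X × Bool) (rest : List (X × Bool)) :
    ∃ t, Wrec a γ δ (ℓ :: rest) = ℓ :: t := by
  rcases rest with _ | ⟨m, r⟩
  · exact ⟨[], rfl⟩
  · exact ⟨_, rfl⟩

lemma Wrec_length_ge : ∀ L : List (X × Bool), L.length ≤ (Wrec a γ δ L).length := by
  intro L
  induction L with
  | nil => simp [Wrec]
  | cons ℓ rest ih =>
    rcases rest with _ | ⟨m, r⟩
    · simp [Wrec]
    · show (ℓ :: m :: r).length ≤ (ℓ :: (seg a (δ ℓ) (γ m) ++ Wrec a γ δ (m :: r))).length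
      simp only [List.length_cons, List.length_append]
      have := ih
      simp only [List.length_cons] at this ⊢
      omega

lemma Wrec_eq_of_length : ∀ L : List (X × Bool),
    (Wrec a γ δ L).length ≤ L.length → Wrec a γ δ L = L := by
  intro L
  induction L with
  | nil => intro _; rfl
  | cons ℓ rest ih =>
    rcases rest with _ | ⟨m, r⟩
    · intro _; rfl
    · intro hlen
      show ℓ :: (seg a (δ ℓ) (γ m) ++ Wrec a γ δ (m :: r)) = ℓ :: m :: r
      have h1 := Wrec_length_ge (a := a) (γ := γ) (δ := δ) (m :: r)
      have h2 : (ℓ :: (seg a (δ ℓ) (γ m) ++ Wrec a γ δ (m :: r))).length ≤ (ℓ :: m :: r).length := hlen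
      simp only [List.length_cons, List.length_append] at h1 h2
      have hseg : (seg a (δ ℓ) (γ m)).length = 0 := by omega
      have hseg' : seg a (δ ℓ) (γ m) = [] := List.length_eq_zero_iff.1 hseg
      rw [hseg', List.nil_append, ih (by simp only [List.length_cons]; omega)]

lemma Wrec_getLast? : ∀ (rest : List (X × Bool)) (ℓ : X × Bool),
    (Wrec a γ δ (ℓ :: rest)).getLast? = (ℓ :: rest).getLast? := by
  intro rest
  induction rest with
  | nil => intro ℓ; rfl
  | cons m r ih =>
    intro ℓ
    show (ℓ :: (seg a (δ ℓ) (γ m) ++ Wrec a γ δ (m :: r))).getLast? = _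
    obtain ⟨t, ht⟩ := Wrec_cons_exists (a := a) (γ := γ) (δ := δ) m r
    have hne : seg a (δ ℓ) (γ m) ++ Wrec a γ δ (m :: r) ≠ [] := by
      rw [ht]; simp
    rw [show ℓ :: (seg a (δ ℓ) (γ m) ++ Wrec a γ δ (m :: r)) =
        (ℓ :: seg a (δ ℓ) (γ m)) ++ Wrec a γ δ (m :: r) by simp,
      List.getLast?_append_of_ne_nil _ (by rw [ht]; simp),
      ih m, List.getLast?_cons_cons]

lemma seg_cases (a : X × Bool) (b c : Bool) :
    seg a b c = [] ∨ ∃ z : X × Bool, seg a b c = [z] ∧ z.1 = a.1 := by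
  unfold seg; split
  · exact Or.inl rfl
  · split
    · exact Or.inr ⟨a, rfl, rfl⟩
    · exact Or.inr ⟨(a.1, !a.2), rfl, rfl⟩

lemma Wrec_chain : ∀ L : List (X × Bool), (∀ ℓ ∈ L, ℓ.1 ≠ a.1) →
    List.Chain' NoCanc L → List.Chain' NoCanc (Wrec a γ δ L) := by
  intro L
  induction L with
  | nil => intro _ _; simp [Wrec]; exact List.isChain_nil
  | cons ℓ rest ih =>
    intro hfst hch
    rcases rest with _ | ⟨m, r⟩
    · simp [Wrec]; exact List.isChain_singleton _
    · obtain ⟨t, ht⟩ := Wrec_cons_exists (a := a) (γ := γ) (δ := δ) m r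
      have ihc : List.Chain' NoCanc (Wrec a γ δ (m :: r)) :=
        ih (fun p hp => hfst p (List.mem_cons_of_mem ℓ hp)) hch.tail
      have hℓ : ℓ.1 ≠ a.1 := hfst ℓ (List.mem_cons_self)
      have hm : m.1 ≠ a.1 := hfst m (List.mem_cons_of_mem ℓ (List.mem_cons_self))
      show List.Chain' NoCanc (ℓ :: (seg a (δ ℓ) (γ m) ++ Wrec a γ δ (m :: r)))
      rcases seg_cases a (δ ℓ) (γ m) with hseg | ⟨z, hseg, hz⟩
      · rw [hseg, List.nil_append, ht]
        rw [ht] at ihc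
        exact ihc.cons_cons (List.isChain_cons_cons.1 hch).1
      · rw [hseg, List.singleton_append, ht]
        rw [ht] at ihc
        refine List.IsChain.cons_cons ?_ (ihc.cons_cons ?_)
        · exact noCanc_of_fst_ne (by rw [hz]; exact hℓ)
        · exact noCanc_of_fst_ne (by rw [hz]; exact fun h => hm h.symm)

lemma Wrec_mk (τ : FreeGroup X ≃* FreeGroup X)
    (htau : ∀ ℓ : X × Bool, τ (mk [ℓ]) = (pw a (γ ℓ))⁻¹ * mk [ℓ] * pw a (δ ℓ)) :
    ∀ (rest : List (X × Bool)) (ℓ : X × Bool),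
      τ (mk (ℓ :: rest)) = (pw a (γ ℓ))⁻¹ * mk (Wrec a γ δ (ℓ :: rest)) *
        pw a (δ ((ℓ :: rest).getLast (List.cons_ne_nil ℓ rest))) := by
  intro rest
  induction rest with
  | nil =>
    intro ℓ
    show τ (mk [ℓ]) = (pw a (γ ℓ))⁻¹ * mk [ℓ] * pw a (δ (([ℓ]).getLast _))
    rw [List.getLast_singleton]
    exact htau ℓ
  | cons m r ih =>
    intro ℓ
    have h1 : mk (ℓ :: m :: r) = mk [ℓ] * mk (m :: r) := by rw [mul_mk]; rfl
    rw [h1, _root_.map_mul τ, htau ℓ, ih m]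
    rw [List.getLast_cons (List.cons_ne_nil m r)]
    show _ = (pw a (γ ℓ))⁻¹ * mk (ℓ :: (seg a (δ ℓ) (γ m) ++ Wrec a γ δ (m :: r))) * _
    rw [show ℓ :: (seg a (δ ℓ) (γ m) ++ Wrec a γ δ (m :: r)) =
        [ℓ] ++ (seg a (δ ℓ) (γ m) ++ Wrec a γ δ (m :: r)) from rfl]
    rw [← mul_mk, ← mul_mk, mk_seg]
    simp [mul_assoc]

end Aux

/-- If `τ` is a Whitehead automorphism of the second kind with multiplier `a`
such that neither `a` nor `a⁻¹` appears in the cyclic word `w`, then either `τ(w) = w`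
or `|τ(w)| > |w|`. -/
theorem whitehead_bad_multiplier {X : Type} [DecidableEq X]
    (w : ConjClasses (FreeGroup X)) (a : X × Bool) (τ : FreeGroup X ≃* FreeGroup X)
    (hτ : IsWhiteheadMult a τ) (ha : a.1 ∉ usedLetters w) :
    actC τ w = w ∨ cycLen w < cycLen (actC τ w) := by
  classical
  obtain ⟨g, hg, hgc⟩ := exists_cycred_rep w
  have hact : actC τ w = ConjClasses.mk (τ g) := by rw [← hg]; rfl
  rcases hL : g.toWord with _ | ⟨ℓ0, rest⟩
  · left
    have hg1 : g = 1 := toWord_eq_nil_iff.1 hL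
    rw [hact, hg1, _root_.map_one, ← hg, hg1]
  · -- extract the exponents
    have hab : ∀ x : X, ∃ p : Bool × Bool,
        τ (FreeGroup.of x) = (pw a p.1)⁻¹ * FreeGroup.of x * pw a p.2 := by
      intro x
      have h := hτ x
      simp only [Set.mem_insert_iff, Set.mem_singleton_iff] at h
      rcases h with h | h | h | h
      · exact ⟨(false, false), by simp [pw, h]⟩
      · exact ⟨(false, true), by simp [pw, h]⟩
      · exact ⟨(true, false), by simp [pw, h, mul_assoc]⟩
      · exact ⟨(true, true), by simp [pw, h, mul_assoc]⟩
    choose αβ hαβ using hab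
    set γ : X × Bool → Bool := fun ℓ => cond ℓ.2 (αβ ℓ.1).1 (αβ ℓ.1).2 with hγ
    set δ : X × Bool → Bool := fun ℓ => cond ℓ.2 (αβ ℓ.1).2 (αβ ℓ.1).1 with hδ
    have htau : ∀ ℓ : X × Bool, τ (mk [ℓ]) = (pw a (γ ℓ))⁻¹ * mk [ℓ] * pw a (δ ℓ) := by
      rintro ⟨x, b⟩
      cases b
      · have hofinv : mk [(x, false)] = (FreeGroup.of x)⁻¹ := by
          show _ = (mk [(x, true)])⁻¹
          rw [inv_mk]; rfl
        have hγ1 : γ (x, false) = (αβ x).2 := rfl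
        have hδ1 : δ (x, false) = (αβ x).1 := rfl
        rw [hofinv, _root_.map_inv, hαβ x, hγ1, hδ1]
        group
      · have hγ1 : γ (x, true) = (αβ x).1 := rfl
        have hδ1 : δ (x, true) = (αβ x).2 := rfl
        show τ (FreeGroup.of x) = _
        rw [hαβ x, hγ1, hδ1]
        rfl
    -- the letters of g avoid a
    have hfst : ∀ ℓ ∈ g.toWord, ℓ.1 ≠ a.1 := by
      intro ℓ hℓ hcontra
      refine ha ⟨g, hg, hgc, ℓ.2, ?_⟩
      rw [← hcontra]
      simpa using hℓ
    set L : List (X × Bool) := ℓ0 :: rest with hLdef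
    have hLne : L ≠ [] := List.cons_ne_nil _ _
    set lastL := L.getLast hLne with hlastdef
    set W := Wrec a γ δ L with hWdef
    set Wc := W ++ seg a (δ lastL) (γ ℓ0) with hWcdef
    obtain ⟨t0, ht0⟩ := Wrec_cons_exists (a := a) (γ := γ) (δ := δ) ℓ0 rest
    have hWmk : τ g = (pw a (γ ℓ0))⁻¹ * mk W * pw a (δ lastL) := by
      conv_lhs => rw [← mk_toWord (x := g), hL]
      exact Wrec_mk τ htau rest ℓ0
    have hconjW : mk Wc = pw a (γ ℓ0) * τ g * (pw a (γ ℓ0))⁻¹ := by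
      rw [hWcdef, ← mul_mk, mk_seg, hWmk]; group
    have hfstL : ∀ ℓ ∈ L, ℓ.1 ≠ a.1 := by rw [← hL]; exact hfst
    have hchL : List.Chain' NoCanc L := hL ▸ chain'_toWord g
    have hWchain : List.Chain' NoCanc W := Wrec_chain L hfstL hchL
    have hlastW : W.getLast? = some lastL := by
      rw [hWdef, hLdef, Wrec_getLast? rest ℓ0, ← hLdef,
        List.getLast?_eq_getLast_of_ne_nil hLne]
    have hlastL_fst : lastL.1 ≠ a.1 := hfstL _ (List.getLast_mem hLne)
    have hWcchain : List.Chain' NoCanc Wc := by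
      rw [hWcdef]; refine List.isChain_append.2 ?_
      refine ⟨hWchain, ?_, ?_⟩
      · rcases seg_cases a (δ lastL) (γ ℓ0) with hs | ⟨z, hs, _⟩ <;> rw [hs]
        · exact List.isChain_nil
        · exact List.isChain_singleton _
      · intro x hx y hy
        rw [hlastW, Option.mem_some_iff] at hx
        subst hx
        have hy1 : y.1 = a.1 := seg_fst a _ _ y (List.mem_of_mem_head? hy)
        exact noCanc_of_fst_ne (by rw [hy1]; exact hlastL_fst)
    have hheadWc : Wc.head? = some ℓ0 := by
      rw [hWcdef, hWdef, hLdef, ht0]; rfl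
    have hcycjunction : ∀ x ∈ Wc.getLast?, NoCanc x ℓ0 := by
      intro x hx
      rcases seg_cases a (δ lastL) (γ ℓ0) with hs | ⟨z, hs, hz⟩
      · rw [hWcdef, hs, List.append_nil, hlastW, Option.mem_some_iff] at hx
        subst hx
        intro h1
        by_contra h2
        have hx2 : lastL.2 = !ℓ0.2 := by
          rcases Bool.eq_or_eq_not lastL.2 ℓ0.2 with h | h
          · exact absurd h h2
          · exact h
        have hxeq : lastL = (ℓ0.1, !ℓ0.2) := Prod.ext h1 hx2
        have hhd : g.toWord.head? = some ℓ0 := by rw [hL]; rfl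
        have hcg := hgc ℓ0 hhd
        apply hcg
        rw [hL, ← hxeq]
        exact List.getLast?_eq_getLast_of_ne_nil hLne
      · rw [hWcdef, hs, List.getLast?_append_of_ne_nil _ (List.cons_ne_nil z []),
          List.getLast?_singleton, Option.mem_some_iff] at hx
        subst hx
        exact noCanc_of_fst_ne (by rw [hz]; exact fun h => hfstL ℓ0 List.mem_cons_self h.symm)
    have hWcWc : List.Chain' NoCanc (Wc ++ Wc) := by
      refine List.isChain_append.2 ?_
      refine ⟨hWcchain, hWcchain, ?_⟩
      intro x hx y hy
      rw [hheadWc, Option.mem_some_iff] at hy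
      subst hy
      exact hcycjunction x hx
    have hred : FreeGroup.toWord (mk Wc) = Wc := by
      rw [toWord_mk, reduce_eq_self_of_chain hWcchain]
    have hclass : ConjClasses.mk (mk Wc) = actC τ w := by
      rw [hact, hconjW, ConjClasses.mk_eq_mk_iff_isConj]
      exact (isConj_iff.2 ⟨pw a (γ ℓ0), rfl⟩).symm
    by_cases hNn : Wc.length ≤ L.length
    · left
      have h1 : L.length ≤ W.length := by rw [hWdef]; exact Wrec_length_ge L
      have h2 : Wc.length = W.length + (seg a (δ lastL) (γ ℓ0)).length := by
        rw [hWcdef, List.length_append]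
      have hseg0 : seg a (δ lastL) (γ ℓ0) = [] := List.length_eq_zero_iff.1 (by omega)
      have hWL : W = L := by
        rw [hWdef]
        exact Wrec_eq_of_length L (by rw [← hWdef]; omega)
      have hmkWc : mk Wc = g := by
        rw [hWcdef, hseg0, List.append_nil, hWL, ← hL, mk_toWord]
      rw [← hclass, hmkWc, hg]
    · right
      push_neg at hNn
      have hup : cycLen w ≤ L.length := Nat.sInf_le ⟨g, hg, by rw [hL]⟩
      have hlow : Wc.length ≤ cycLen (actC τ w) := by
        have hne : {n | ∃ h : FreeGroup X, ConjClasses.mk h = actC τ w ∧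
            (FreeGroup.toWord h).length = n}.Nonempty :=
          ⟨Wc.length, mk Wc, hclass, by rw [hred]⟩
        obtain ⟨h, hh, hlen⟩ := Nat.sInf_mem hne
        have hcj : IsConj (mk Wc) h :=
          ConjClasses.mk_eq_mk_iff_isConj.1 (hclass.trans hh.symm)
        obtain ⟨u, hu⟩ := isConj_iff.1 hcj
        calc Wc.length ≤ (u * mk Wc * u⁻¹).norm := norm_conj_ge hWcWc u
        _ = (FreeGroup.toWord h).length := by rw [hu]; rfl
        _ = cycLen (actC τ w) := hlen
      omega
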